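/- Suppose vol_n > 0 and let μ ∈ ℝ be such that xᵀ Φ_n x ≥ μ‖x‖² for all x ∈ ℝ^N. Then for every e ∈ ℝ^N, the expected squared error of one step of the n-row pursuit under volume sampling satisfies Σ_{|S|=n} (v_S²/vol_n) · ‖R_S e‖² ≤ (1 − μ/vol_n) · ‖e‖². -/

import Mathlib

open Matrix BigOperators Finset

/-- The submatrix of `A` formed by the rows indexed by the subset `S`. -/
def subMat {M N : ℕ} (A : Matrix (Fin M) (Fin N) ℝ) (S : Finset (Fin M)) :
    Matrix {i // i ∈ S} (Fin N) ℝ :=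
  A.submatrix (fun i => (i : Fin M)) id

/-- The squared volume `v_S² = det (A_S A_Sᵀ)` of the parallelepiped spanned by
the rows of `A` indexed by `S`. -/
noncomputable def volSq {M N : ℕ} (A : Matrix (Fin M) (Fin N) ℝ) (S : Finset (Fin M)) : ℝ :=
  (subMat A S * (subMat A S)ᵀ).det

/-- The quasi projector `Q_S = A_Sᵀ · adj(A_S A_Sᵀ) · A_S`. -/
noncomputable def quasiProj {M N : ℕ} (A : Matrix (Fin M) (Fin N) ℝ) (S : Finset (Fin M)) :
    Matrix (Fin N) (Fin N) ℝ :=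
  (subMat A S)ᵀ * (subMat A S * (subMat A S)ᵀ).adjugate * subMat A S

/-- The total quasi projector `Φ_n = Σ_{|S| = n} Q_S`. -/
noncomputable def totalQuasiProj {M N : ℕ} (A : Matrix (Fin M) (Fin N) ℝ) (n : ℕ) :
    Matrix (Fin N) (Fin N) ℝ :=
  ∑ S ∈ Finset.univ.powersetCard n, quasiProj A S

/-- The sum of squared `n`-volumes `vol_n = Σ_{|S| = n} v_S²` (with `vol_0 = 1`). -/
noncomputable def vol {M N : ℕ} (A : Matrix (Fin M) (Fin N) ℝ) (n : ℕ) : ℝ :=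
  ∑ S ∈ Finset.univ.powersetCard n, volSq A S

/-- Squared Euclidean norm of a vector in `ℝ^N`. -/
def normSq {N : ℕ} (x : Fin N → ℝ) : ℝ := ∑ i, x i ^ 2

/-- The rejection operator `R_S = I − Q_S / v_S²` when `v_S² ≠ 0`
(equal to `I − P_S` for linearly independent rows), and `R_S = I` otherwise. -/
noncomputable def rej {M N : ℕ} (A : Matrix (Fin M) (Fin N) ℝ) (S : Finset (Fin M)) :
    Matrix (Fin N) (Fin N) ℝ :=
  if volSq A S = 0 then 1 else 1 - (volSq A S)⁻¹ • quasiProj A S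

lemma normSq_eq_dot {N : ℕ} (x : Fin N → ℝ) : normSq x = x ⬝ᵥ x := by
  simp [normSq, dotProduct, sq]

lemma quasiProj_transpose {M N : ℕ} (A : Matrix (Fin M) (Fin N) ℝ) (S : Finset (Fin M)) :
    (quasiProj A S)ᵀ = quasiProj A S := by
  set B := subMat A S
  have hG : (B * Bᵀ)ᵀ = B * Bᵀ := by rw [transpose_mul, transpose_transpose]
  simp [quasiProj, Matrix.transpose_mul, transpose_transpose, adjugate_transpose, hG,
    Matrix.mul_assoc]

lemma quasiProj_sq {M N : ℕ} (A : Matrix (Fin M) (Fin N) ℝ) (S : Finset (Fin M)) :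
    quasiProj A S * quasiProj A S = volSq A S • quasiProj A S := by
  set B := subMat A S
  have : quasiProj A S * quasiProj A S
      = Bᵀ * ((B * Bᵀ).adjugate * (B * Bᵀ)) * ((B * Bᵀ).adjugate * B) := by
    simp [quasiProj, Matrix.mul_assoc]
    rfl
  rw [this, adjugate_mul]
  simp [quasiProj, volSq, Matrix.mul_assoc, Matrix.mul_smul, Matrix.smul_mul]
  rfl

lemma quasiProj_eq_zero {M N : ℕ} (A : Matrix (Fin M) (Fin N) ℝ) (S : Finset (Fin M))
    (h : volSq A S = 0) : quasiProj A S = 0 := by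
  set B := subMat A S
  have hBH : Bᴴ = Bᵀ := Matrix.conjTranspose_eq_transpose_of_trivial B
  have hdet : (B * Bᵀ).det = 0 := h
  have h0 : (B * Bᵀ).adjugate * (B * Bᴴ) = 0 := by
    rw [hBH, adjugate_mul, hdet, zero_smul]
  rw [mul_self_mul_conjTranspose_eq_zero] at h0
  simp [quasiProj, Matrix.mul_assoc, show (subMat A S * (subMat A S)ᵀ).adjugate * subMat A S = 0 from h0]

lemma dot_symm_mulVec {N : ℕ} (Q : Matrix (Fin N) (Fin N) ℝ) (hQ : Qᵀ = Q)
    (x y : Fin N → ℝ) : x ⬝ᵥ (Q *ᵥ y) = (Q *ᵥ x) ⬝ᵥ y := by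
  rw [Matrix.dotProduct_mulVec, ← Matrix.mulVec_transpose, hQ]

lemma key_identity {M N : ℕ} (A : Matrix (Fin M) (Fin N) ℝ) (S : Finset (Fin M))
    (e : Fin N → ℝ) :
    volSq A S * normSq (rej A S *ᵥ e) =
      volSq A S * normSq e - e ⬝ᵥ (quasiProj A S *ᵥ e) := by
  by_cases h : volSq A S = 0
  · rw [h, quasiProj_eq_zero A S h]; simp
  · set v := volSq A S
    set Q := quasiProj A S with hQdef
    have hQ : Qᵀ = Q := quasiProj_transpose A S
    set q := e ⬝ᵥ (Q *ᵥ e) with hq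
    have hrej : rej A S *ᵥ e = e - v⁻¹ • (Q *ᵥ e) := by
      rw [rej, if_neg h, Matrix.sub_mulVec, Matrix.one_mulVec, Matrix.smul_mulVec]
    have hQQ : (Q *ᵥ e) ⬝ᵥ (Q *ᵥ e) = v * q := by
      rw [← dot_symm_mulVec Q hQ, Matrix.mulVec_mulVec, quasiProj_sq, Matrix.smul_mulVec,
        dotProduct_smul]
      rfl
    have hsym : (Q *ᵥ e) ⬝ᵥ e = q := (dot_symm_mulVec Q hQ e e).symm
    rw [normSq_eq_dot, normSq_eq_dot, hrej]
    rw [dotProduct_sub, sub_dotProduct, sub_dotProduct, dotProduct_smul, smul_dotProduct,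
      smul_dotProduct, dotProduct_smul, hQQ, hsym, ← hq]
    field_simp
    linear_combination (q * (v * v⁻¹) - q) * mul_inv_cancel₀ h

/-- One step of the `n`-row pursuit under volume sampling: if `vol_n > 0` and
`μ` is a lower bound on the quadratic form of `Φ_n`, then the expected squared
error `Σ_{|S|=n} (v_S²/vol_n) ‖R_S e‖²` is at most `(1 − μ/vol_n) ‖e‖²`. -/
theorem expected_gain_one_step_volume_sampling {M N n : ℕ}
    (A : Matrix (Fin M) (Fin N) ℝ) (hvol : 0 < vol A n) (μ : ℝ)
    (hμ : ∀ x : Fin N → ℝ, μ * normSq x ≤ x ⬝ᵥ (totalQuasiProj A n *ᵥ x))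
    (e : Fin N → ℝ) :
    ∑ S ∈ Finset.univ.powersetCard n, (volSq A S / vol A n) * normSq (rej A S *ᵥ e) ≤
      (1 - μ / vol A n) * normSq e := by
  have hv : vol A n ≠ 0 := ne_of_gt hvol
  have hmv : (∑ S ∈ Finset.univ.powersetCard n, quasiProj A S) *ᵥ e
      = ∑ S ∈ Finset.univ.powersetCard n, quasiProj A S *ᵥ e := by
    ext i
    simp only [Matrix.mulVec, dotProduct, Matrix.sum_apply, Finset.sum_apply, Finset.sum_mul]
    rw [Finset.sum_comm]
  have hPhi : e ⬝ᵥ (totalQuasiProj A n *ᵥ e)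
      = ∑ S ∈ Finset.univ.powersetCard n, e ⬝ᵥ (quasiProj A S *ᵥ e) := by
    rw [totalQuasiProj, hmv]
    simp only [dotProduct, Finset.sum_apply, Finset.mul_sum]
    exact Finset.sum_comm
  have hsum : ∑ S ∈ Finset.univ.powersetCard n, (volSq A S / vol A n) * normSq (rej A S *ᵥ e)
      = normSq e - (e ⬝ᵥ (totalQuasiProj A n *ᵥ e)) / vol A n := by
    have heach : ∀ S ∈ Finset.univ.powersetCard n,
        (volSq A S / vol A n) * normSq (rej A S *ᵥ e)
        = (volSq A S * normSq e - e ⬝ᵥ (quasiProj A S *ᵥ e)) / vol A n := by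
      intro S _
      rw [← key_identity]
      field_simp
    rw [Finset.sum_congr rfl heach, ← Finset.sum_div, Finset.sum_sub_distrib, ← hPhi,
      ← Finset.sum_mul]
    rw [show (∑ S ∈ Finset.univ.powersetCard n, volSq A S) = vol A n from rfl]
    field_simp
  rw [hsum]
  have h1 : μ * normSq e / vol A n ≤ (e ⬝ᵥ (totalQuasiProj A n *ᵥ e)) / vol A n :=
    div_le_div_of_nonneg_right (hμ e) hvol.le
  have h2 : (1 - μ / vol A n) * normSq e = normSq e - μ * normSq e / vol A n := by ring
  rw [h2]
  linarith
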